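/- For every integer n ≥ 4, the conflict-free connection number of the cycle C_n on n vertices equals 2. -/

import Mathlib

open SimpleGraph

/-- An edge-coloring `c` with `k` colors makes `G` conflict-free connected if every two
distinct vertices are joined by a path on which some color appears on exactly one edge. -/
def SimpleGraph.IsCFCColoring {V : Type*} (G : SimpleGraph V) {k : ℕ}
    (c : Sym2 V → Fin k) : Prop :=
  ∀ u v : V, u ≠ v → ∃ p : G.Walk u v, p.IsPath ∧
    ∃ col : Fin k, (p.edges.map c).count col = 1

/-- The conflict-free connection number of `G`: the smallest number of colors in an
edge-coloring of `G` that makes `G` conflict-free connected. -/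
noncomputable def SimpleGraph.cfc {V : Type*} (G : SimpleGraph V) : ℕ :=
  sInf {k | ∃ c : Sym2 V → Fin k, G.IsCFCColoring c}

/-- For `n ≥ 4`, the conflict-free connection number of the cycle on `n` vertices is 2. -/

lemma modh {x n : ℕ} (h1 : n ≤ x) (h2 : x < 2*n) : x % n = x - n := by
  rw [Nat.mod_eq_sub_mod h1, Nat.mod_eq_of_lt (by omega)]

lemma adj_succ {n : ℕ} (k : ℕ) (h : k + 1 < n) :
    (cycleGraph n).Adj ⟨k, by omega⟩ ⟨k+1, h⟩ := by
  rw [cycleGraph_adj']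
  right
  show ((⟨k+1,h⟩ : Fin n) - ⟨k, by omega⟩).val = 1
  rw [Fin.sub_def]
  simp only [Fin.val_mk]
  rw [modh (by omega) (by omega)]
  omega

def asc {n : ℕ} (a : ℕ) : (d : ℕ) → (h : a + d < n) → (cycleGraph n).Walk ⟨a, by omega⟩ ⟨a + d, h⟩
  | 0, _ => Walk.nil
  | d+1, h => (asc a d (by omega)).concat (adj_succ (a+d) h)

lemma asc_support {n : ℕ} (a d : ℕ) (h : a + d < n) :
    ∀ x ∈ (asc a d h).support, a ≤ x.1 ∧ x.1 ≤ a + d := by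
  induction d with
  | zero => simp [asc]
  | succ d ih =>
    intro x hx
    rw [asc, Walk.support_concat, List.mem_append, List.mem_singleton] at hx
    rcases hx with hx | hx
    · have := ih (by omega) x hx; omega
    · subst hx; simp only [Fin.val_mk]; omega

lemma asc_isPath {n : ℕ} (a d : ℕ) (h : a + d < n) : (asc a d h).IsPath := by
  induction d with
  | zero => simp [asc]
  | succ d ih =>
    rw [asc, Walk.isPath_def, Walk.support_concat, List.nodup_append]
    refine ⟨(ih (by omega)).support_nodup, List.nodup_singleton _, ?_⟩
    intro x hx y hx2 hxy; subst hxy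
    rw [List.mem_singleton] at hx2
    subst hx2
    have := asc_support a d (by omega) _ hx
    simp only [Fin.val_mk] at this
    omega

lemma asc_edges {n : ℕ} (a d : ℕ) (h : a + d < n) (hn : 3 ≤ n) (e : Sym2 (Fin n))
    (he : e ∈ (asc a d h).edges) : e ≠ s(⟨0, by omega⟩, ⟨n-1, by omega⟩) := by
  induction d with
  | zero => simp [asc] at he
  | succ d ih =>
    rw [asc, Walk.edges_concat, List.concat_eq_append, List.mem_append, List.mem_singleton] at he
    rcases he with he | he
    · exact ih (by omega) he
    · subst he
      intro hc
      rw [Sym2.eq_iff] at hc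
      rcases hc with ⟨h1, h2⟩ | ⟨h1, h2⟩ <;>
        [skip; skip] <;>
        simp only [Fin.mk.injEq] at h1 h2 <;> omega

def wrapE (n : ℕ) (hn : 4 ≤ n) : Sym2 (Fin n) := s(⟨0, by omega⟩, ⟨n-1, by omega⟩)

def col (n : ℕ) (hn : 4 ≤ n) : Sym2 (Fin n) → Fin 2 :=
  fun e => if e = wrapE n hn then 0 else 1

lemma adj_wrap {n : ℕ} (hn : 4 ≤ n) :
    (cycleGraph n).Adj ⟨0, by omega⟩ ⟨n-1, by omega⟩ := by
  rw [cycleGraph_adj']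
  left
  show ((⟨0, by omega⟩ : Fin n) - ⟨n-1, by omega⟩).val = 1
  rw [Fin.sub_def]
  simp only [Fin.val_mk]
  rw [Nat.mod_eq_of_lt (by omega)]
  omega

lemma count_zero_of_ne {n : ℕ} (hn : 4 ≤ n) (l : List (Sym2 (Fin n)))
    (h : ∀ e ∈ l, e ≠ wrapE n hn) : (l.map (col n hn)).count 0 = 0 := by
  rw [List.count_eq_zero]
  intro hmem
  rw [List.mem_map] at hmem
  obtain ⟨e, he, hce⟩ := hmem
  rw [col, if_neg (h e he)] at hce
  exact one_ne_zero hce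

lemma key {n : ℕ} (hn : 4 ≤ n) (u v : Fin n) (huv : u.1 < v.1) :
    ∃ p : (cycleGraph n).Walk u v, p.IsPath ∧
      (p.edges.map (col n hn)).count 0 = 1 := by
  have hv := v.isLt
  have hu := u.isLt
  let p1 : (cycleGraph n).Walk ⟨0, by omega⟩ u :=
    (asc 0 u.1 (by omega)).copy rfl (Fin.ext (by simp))
  let p2 : (cycleGraph n).Walk v ⟨n-1, by omega⟩ :=
    (asc v.1 (n-1-v.1) (by omega)).copy (Fin.ext rfl) (Fin.ext (by simp; omega))
  refine ⟨p1.reverse.append (Walk.cons (adj_wrap hn) p2.reverse), ?_, ?_⟩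
  · rw [Walk.isPath_def, Walk.support_append, Walk.support_reverse, Walk.support_cons,
      List.tail_cons, Walk.support_reverse, Walk.support_copy, Walk.support_copy,
      List.nodup_append]
    refine ⟨List.nodup_reverse.mpr (asc_isPath _ _ _).support_nodup,
      List.nodup_reverse.mpr (asc_isPath _ _ _).support_nodup, ?_⟩
    intro x hx y hy hxy; subst hxy
    rw [List.mem_reverse] at hx hy
    have h1 := asc_support _ _ _ _ hx
    have h2 := asc_support _ _ _ _ hy
    omega
  · rw [Walk.edges_append, Walk.edges_reverse, Walk.edges_cons, Walk.edges_reverse,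
      Walk.edges_copy, Walk.edges_copy, List.map_append, List.count_append,
      List.map_reverse, List.count_reverse, List.map_cons, List.count_cons,
      List.map_reverse, List.count_reverse]
    rw [count_zero_of_ne hn _ (fun e he => asc_edges _ _ _ (by omega) e he),
      count_zero_of_ne hn _ (fun e he => asc_edges _ _ _ (by omega) e he)]
    simp [col, wrapE]

lemma not_adj_02 {n : ℕ} (hn : 4 ≤ n) :
    ¬(cycleGraph n).Adj ⟨0, by omega⟩ ⟨2, by omega⟩ := by
  rw [cycleGraph_adj']
  push_neg
  refine ⟨?_, ?_⟩
  · rw [Fin.sub_def]; simp only [Fin.val_mk]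
    rw [Nat.mod_eq_of_lt (by omega)]; omega
  · rw [Fin.sub_def]; simp only [Fin.val_mk]
    rw [modh (by omega) (by omega)]; omega

lemma col_isCFC {n : ℕ} (hn : 4 ≤ n) : (cycleGraph n).IsCFCColoring (col n hn) := by
  intro u v huv
  rcases lt_trichotomy u.1 v.1 with h | h | h
  · obtain ⟨p, hp, hc⟩ := key hn u v h
    exact ⟨p, hp, 0, hc⟩
  · exact absurd (Fin.ext h) huv
  · obtain ⟨p, hp, hc⟩ := key hn v u h
    refine ⟨p.reverse, hp.reverse, 0, ?_⟩
    rwa [Walk.edges_reverse, List.map_reverse, List.count_reverse]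

theorem stmt_11 (n : ℕ) (hn : 4 ≤ n) : (cycleGraph n).cfc = 2 := by
  have h2 : 2 ∈ {k | ∃ c : Sym2 (Fin n) → Fin k, (cycleGraph n).IsCFCColoring c} :=
    ⟨col n hn, col_isCFC hn⟩
  refine le_antisymm (Nat.sInf_le h2) (le_csInf ⟨2, h2⟩ ?_)
  rintro k ⟨c, hc⟩
  by_contra hk
  push_neg at hk
  interval_cases k
  · obtain ⟨p, hp, col, hcol⟩ := hc ⟨0, by omega⟩ ⟨2, by omega⟩
      (by simp [Fin.ext_iff])
    exact col.elim0
  · obtain ⟨p, hp, cl, hcol⟩ := hc ⟨0, by omega⟩ ⟨2, by omega⟩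
      (by simp [Fin.ext_iff])
    have hlen : (p.edges.map c).count cl = p.length := by
      rw [List.count_eq_length.mpr, List.length_map, Walk.length_edges]
      intro x _
      exact Subsingleton.elim _ _
    rw [hlen] at hcol
    rcases Nat.lt_or_ge p.length 2 with h | h
    · interval_cases h' : p.length
      · exact absurd (Walk.eq_of_length_eq_zero h') (by simp [Fin.ext_iff])
      · exact not_adj_02 hn (Walk.adj_of_length_eq_one h')
    · omega
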